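/- Fix δ ∈ (0,1) and let Δ(τ₂, δ) := (1+δ)(1−τ₂)/(2−τ₂) − (1−δ)τ₂/(1+τ₂). Then Δ(·, δ) is strictly decreasing on [0,1], Δ(1/2, δ) > 0 and Δ(1, δ) < 0, and there exists a unique τ̂₂(δ) ∈ (1/2, 1) with Δ(τ̂₂(δ), δ) = 0; moreover τ̂₂(δ) = (−(1−δ) + √(1+3δ²))/(2δ). -/

import Mathlib

noncomputable section

/-! Discrimination setting (Section 5.2 of the paper): `K = 2`, prior means `0`,
prior variances `Σ⁰₁ = Σ⁰₂ = 1`, budget `T = 1`.  For discrimination level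
`δ ∈ (0,1)` the politician's weights are `((1+δ)/2, (1−δ)/2)`; for partiality
level `p ∈ [0,1)` the advisor's weights are `((1−p)/2, (1+p)/2)`.

* `ah1 p δ, ah2 p δ` are the auxiliary weights `α̂₁(p,δ), α̂₂(p,δ)`.
* `tau2aux p δ` is `τ₂^aux(p,δ)` and `tau2star p δ = min{τ₂^aux(p,δ), 1}` is the
  advisor's equilibrium allocation of tests to group 2 (group 1 gets the rest).
* `omega τ₂ δ` is utilitarian welfare as a function of the allocation, and
  `W p δ = ω(τ₂*(p,δ), δ)` is equilibrium welfare.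
* `Dlt τ₂ δ` is the difference of the two groups' ex ante expected utilities and
  `Ineq p δ = |Δ(τ₂*(p,δ), δ)|` is equilibrium inequality. -/

/-- Auxiliary weight `α̂₁(p,δ)`. -/
def ah1 (p δ : ℝ) : ℝ :=
  if p < (1 - δ) / 2 then (1 / 2) * Real.sqrt ((1 + δ) * (1 - 2 * p - δ)) else 0

/-- Auxiliary weight `α̂₂(p,δ)`. -/
def ah2 (p δ : ℝ) : ℝ := (1 / 2) * Real.sqrt ((1 - δ) * (1 + 2 * p + δ))

/-- `τ₂^aux(p,δ)`. -/
def tau2aux (p δ : ℝ) : ℝ := (2 * ah2 p δ - ah1 p δ) / (ah1 p δ + ah2 p δ)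

/-- The advisor's equilibrium allocation of tests to group 2, `τ₂*(p,δ)`. -/
def tau2star (p δ : ℝ) : ℝ := min (tau2aux p δ) 1

/-- Utilitarian welfare `ω(τ₂, δ)` from splitting the budget as `(1−τ₂, τ₂)`. -/
def omega (τ2 δ : ℝ) : ℝ :=
  -3 - δ ^ 2 + ((1 + δ) ^ 2 / 2 + (1 + δ) * (1 - τ2)) / (2 - τ2)
    + ((1 - δ) ^ 2 / 2 + (1 - δ) * τ2) / (1 + τ2)

/-- Equilibrium welfare `W(p,δ)`. -/
def W (p δ : ℝ) : ℝ := omega (tau2star p δ) δ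

/-- Difference `Δ(τ₂,δ)` of the two groups' ex ante expected utilities. -/
def Dlt (τ2 δ : ℝ) : ℝ :=
  (1 + δ) * (1 - τ2) / (2 - τ2) - (1 - δ) * τ2 / (1 + τ2)

/-- Equilibrium inequality `I(p,δ)`. -/
def Ineq (p δ : ℝ) : ℝ := |Dlt (tau2star p δ) δ|

/-- Lemma 6 of the paper.  `Δ(·,δ)` is strictly decreasing on
`[0,1]`, positive at `1/2`, negative at `1`, and has the unique zero
`τ̂₂(δ) = (−(1−δ) + √(1+3δ²))/(2δ)` in `(1/2, 1)`. -/
theorem stmt_12 (δ : ℝ) (hδ : δ ∈ Set.Ioo (0 : ℝ) 1) :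
    StrictAntiOn (fun t => Dlt t δ) (Set.Icc (0 : ℝ) 1) ∧
    0 < Dlt (1 / 2) δ ∧ Dlt 1 δ < 0 ∧
    (let τhat : ℝ := (-(1 - δ) + Real.sqrt (1 + 3 * δ ^ 2)) / (2 * δ)
     τhat ∈ Set.Ioo (1 / 2 : ℝ) 1 ∧ Dlt τhat δ = 0 ∧
      ∀ t ∈ Set.Ioo (1 / 2 : ℝ) 1, Dlt t δ = 0 → t = τhat) := by
  obtain ⟨hδ0, hδ1⟩ := hδ
  have hanti : StrictAntiOn (fun t => Dlt t δ) (Set.Icc (0 : ℝ) 1) := by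
    intro x hx y hy hxy
    obtain ⟨hx0, hx1⟩ := hx
    obtain ⟨hy0, hy1⟩ := hy
    have d2x : (0:ℝ) < 2 - x := by linarith
    have d2y : (0:ℝ) < 2 - y := by linarith
    have d1x : (0:ℝ) < 1 + x := by linarith
    have d1y : (0:ℝ) < 1 + y := by linarith
    have h1 : (1 - y) / (2 - y) < (1 - x) / (2 - x) := by
      rw [div_lt_div_iff₀ d2y d2x]; nlinarith
    have h2 : x / (1 + x) < y / (1 + y) := by
      rw [div_lt_div_iff₀ d1x d1y]; nlinarith
    have e1 := mul_lt_mul_of_pos_left h1 (show (0:ℝ) < 1 + δ by linarith)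
    have e2 := mul_lt_mul_of_pos_left h2 (show (0:ℝ) < 1 - δ by linarith)
    simp only [Dlt, mul_div_assoc]
    linarith
  refine ⟨hanti, by simp only [Dlt]; norm_num; nlinarith, by simp only [Dlt]; norm_num; linarith, ?_⟩
  intro τhat
  set s := Real.sqrt (1 + 3 * δ ^ 2) with hs
  have hs0 : 0 ≤ s := Real.sqrt_nonneg _
  have hs2 : s ^ 2 = 1 + 3 * δ ^ 2 := Real.sq_sqrt (by positivity)
  have hs1 : 1 < s := by nlinarith
  have hsd : s < 1 + δ := by nlinarith
  have hhalf : (1/2 : ℝ) < τhat := by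
    rw [lt_div_iff₀ (by linarith)]; linarith
  have hone : τhat < 1 := by
    rw [div_lt_one (by linarith)]; linarith
  have hquad : 2 * δ * τhat ^ 2 + 2 * (1 - δ) * τhat - (1 + δ) = 0 := by
    have h2δ : (2 * δ : ℝ) ≠ 0 := by positivity
    have hτ : τhat = (-(1 - δ) + s) / (2 * δ) := rfl
    rw [hτ]
    field_simp
    nlinarith [hs2, show δ * s ^ 2 = δ * (1 + 3 * δ ^ 2) by rw [hs2], show δ ^ 2 * s ^ 2 = δ ^ 2 * (1 + 3 * δ ^ 2) by rw [hs2]]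
  have hzero : Dlt τhat δ = 0 := by
    have d2 : (2 - τhat : ℝ) ≠ 0 := by linarith
    have d1 : (1 + τhat : ℝ) ≠ 0 := by linarith
    simp only [Dlt]
    field_simp
    nlinarith [hquad]
  refine ⟨⟨hhalf, hone⟩, hzero, ?_⟩
  intro t ht h0
  have h1 : t ∈ Set.Icc (0:ℝ) 1 := ⟨by linarith [ht.1], ht.2.le⟩
  have h2 : τhat ∈ Set.Icc (0:ℝ) 1 := ⟨by linarith, hone.le⟩
  exact hanti.injOn h1 h2 (by rw [h0, hzero])
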